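/- Let g, h₁, …, hₙ be mutually independent random variables, each with the exponential distribution of rate 1 (density e^{−x} on [0,∞)), and let a₁, …, aₙ ≥ 0 be real constants. Then P(g ≥ Σ_{j=1}^{n} a_j·h_j) = Π_{j=1}^{n} 1/(1 + a_j). -/

import Mathlib

open MeasureTheory ProbabilityTheory Real Set
open scoped ENNReal NNReal

lemma expMeasure_apply' (s : Set ℝ) (hs : MeasurableSet s) :
    expMeasure 1 s = ∫⁻ x in s, exponentialPDF 1 x := by
  rw [expMeasure, gammaMeasure, withDensity_apply _ hs]; rfl

lemma expMeasure_Iio_zero : expMeasure 1 (Iio 0) = 0 := by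
  rw [expMeasure_apply' _ measurableSet_Iio]
  exact lintegral_exponentialPDF_of_nonpos le_rfl

lemma expMeasure_Ici {t : ℝ} (ht : 0 ≤ t) :
    expMeasure 1 (Ici t) = ENNReal.ofReal (exp (-t)) := by
  rw [expMeasure_apply' _ measurableSet_Ici,
    ← Measure.restrict_congr_set (Ioi_ae_eq_Ici (a := t))]
  have h1 : ∀ x ∈ Ioi t, exponentialPDF 1 x = ENNReal.ofReal (exp (-x)) := by
    intro x hx
    rw [exponentialPDF_of_nonneg (le_trans ht (le_of_lt hx))]
    norm_num
  rw [setLIntegral_congr_fun measurableSet_Ioi h1,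
    ← ofReal_integral_eq_lintegral_ofReal]
  · rw [integral_exp_neg_Ioi]
  · simpa [IntegrableOn] using exp_neg_integrableOn_Ioi t one_pos
  · exact ae_of_all _ fun x => (exp_pos _).le

lemma laplace_exp {a : ℝ} (ha : 0 ≤ a) :
    ∫⁻ x, ENNReal.ofReal (exp (-(a * x))) ∂(expMeasure 1)
      = ENNReal.ofReal (1 / (1 + a)) := by
  have hmeas : Measurable fun x : ℝ => ENNReal.ofReal (exp (-(a * x))) :=
    ENNReal.measurable_ofReal.comp (Real.continuous_exp.comp
      (continuous_const.mul continuous_id).neg).measurable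
  have hpdfmeas : Measurable fun x : ℝ => exponentialPDF 1 x :=
    (measurable_exponentialPDFReal 1).ennreal_ofReal
  have h1a : (0:ℝ) < 1 + a := by linarith
  rw [expMeasure, gammaMeasure]
  rw [lintegral_withDensity_eq_lintegral_mul _ (by
      have : gammaPDF 1 1 = exponentialPDF 1 := rfl
      rw [this]; exact hpdfmeas) hmeas]
  simp only [Pi.mul_apply]
  have key : ∀ x : ℝ, ENNReal.ofReal (1 + a) *
      (exponentialPDF 1 x * ENNReal.ofReal (exp (-(a * x))))
      = exponentialPDF (1 + a) x := by
    intro x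
    rcases le_or_gt 0 x with hx | hx
    · rw [exponentialPDF_of_nonneg hx, exponentialPDF_of_nonneg hx,
        ← ENNReal.ofReal_mul (by positivity), ← ENNReal.ofReal_mul h1a.le]
      congr 1
      simp only [one_mul]
      rw [← Real.exp_add]
      ring_nf
    · rw [exponentialPDF_of_neg hx, exponentialPDF_of_neg hx, zero_mul, mul_zero]
  have hT : ENNReal.ofReal (1 + a) *
      ∫⁻ x, exponentialPDF 1 x * ENNReal.ofReal (exp (-(a * x))) = 1 := by
    rw [← lintegral_const_mul _ (by exact hpdfmeas.mul hmeas : Measurable fun x => exponentialPDF 1 x * ENNReal.ofReal (exp (-(a * x))))]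
    simp_rw [key]
    exact lintegral_exponentialPDF_eq_one h1a
  have hb0 : ENNReal.ofReal (1 + a) ≠ 0 := by
    simp [ENNReal.ofReal_eq_zero, not_le, h1a]
  calc ∫⁻ x, exponentialPDF 1 x * ENNReal.ofReal (exp (-(a * x)))
      = (ENNReal.ofReal (1 + a))⁻¹ * (ENNReal.ofReal (1 + a) *
        ∫⁻ x, exponentialPDF 1 x * ENNReal.ofReal (exp (-(a * x)))) := by
        rw [← mul_assoc, ENNReal.inv_mul_cancel hb0 ENNReal.ofReal_ne_top, one_mul]
    _ = (ENNReal.ofReal (1 + a))⁻¹ := by rw [hT, mul_one]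
    _ = ENNReal.ofReal (1 / (1 + a)) := by
        rw [one_div, ENNReal.ofReal_inv_of_pos h1a]

open ENNReal in
lemma lintegral_prod_of_iIndepFun {ι Ω : Type*} [MeasurableSpace Ω] {P : Measure Ω}
    [IsProbabilityMeasure P] {F : ι → Ω → ℝ≥0∞} (hmeas : ∀ i, Measurable (F i))
    (hind : iIndepFun F P) (s : Finset ι) :
    ∫⁻ ω, ∏ i ∈ s, F i ω ∂P = ∏ i ∈ s, ∫⁻ ω, F i ω ∂P := by
  classical
  induction s using Finset.induction with
  | empty => simp
  | @insert i s hi ih =>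
    have hprod : Measurable fun ω => ∏ j ∈ s, F j ω :=
      Finset.measurable_prod (f := F) s fun j _ => hmeas j
    have hIndep : IndepFun (∏ j ∈ s, F j) (F i) P :=
      hind.indepFun_finset_prod_of_notMem hmeas hi
    have := lintegral_mul_eq_lintegral_mul_lintegral_of_indepFun
      (μ := P) (f := F i) (g := fun ω => ∏ j ∈ s, F j ω)
      (hmeas i) hprod (by
        have h2 : (fun ω => ∏ j ∈ s, F j ω) = ∏ j ∈ s, F j := by
          ext ω; simp [Finset.prod_apply]
        rw [h2]; exact hIndep.symm)
    simp only [Pi.mul_apply] at this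
    simp_rw [Finset.prod_insert hi]
    rw [this, ih]

lemma iIndepFun_congr_ae {ι Ω : Type*} [MeasurableSpace Ω] {P : Measure Ω}
    {f f' : ι → Ω → ℝ} (hff' : ∀ i, f i =ᵐ[P] f' i)
    (hf : iIndepFun f P) :
    iIndepFun f' P := by
  rw [iIndepFun_iff_measure_inter_preimage_eq_mul] at hf ⊢
  intro S sets hsets
  have hae : ∀ᵐ ω ∂P, ∀ i ∈ S, f i ω = f' i ω :=
    (ae_ball_iff S.countable_toSet).2 fun i _ => hff' i
  have h1 : ∀ i ∈ S, P (f' i ⁻¹' sets i) = P (f i ⁻¹' sets i) := by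
    intro i hiS
    apply measure_congr
    filter_upwards [hff' i] with ω hω
    simp only [eq_iff_iff]
    show f' i ω ∈ sets i ↔ f i ω ∈ sets i
    rw [hω]
  have h2 : P (⋂ i ∈ S, f' i ⁻¹' sets i) = P (⋂ i ∈ S, f i ⁻¹' sets i) := by
    apply measure_congr
    filter_upwards [hae] with ω hω
    simp only [eq_iff_iff]
    show ω ∈ ⋂ i ∈ S, f' i ⁻¹' sets i ↔ ω ∈ ⋂ i ∈ S, f i ⁻¹' sets i
    simp only [Set.mem_iInter, Set.mem_preimage]
    exact ⟨fun H j hj => by rw [hω j hj]; exact H j hj,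
      fun H j hj => by rw [← hω j hj]; exact H j hj⟩
  rw [h2, hf S hsets]
  exact (Finset.prod_congr rfl h1).symm

/-- If `g, h 0, …, h (n-1)` are mutually independent, each exponentially distributed with
rate 1, and `a j ≥ 0` are constants, then
`P(g ≥ Σ_j a j · h j) = Π_j 1 / (1 + a j)`. -/
theorem stmt_3 {Ω : Type*} [MeasurableSpace Ω] (P : Measure Ω) [IsProbabilityMeasure P]
    (n : ℕ) (g : Ω → ℝ) (h : Fin n → Ω → ℝ)
    (hglaw : Measure.map g P = expMeasure 1)
    (hhlaw : ∀ j, Measure.map (h j) P = expMeasure 1)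
    (hindep : iIndepFun
      (Fin.cons g h : Fin (n + 1) → Ω → ℝ) P)
    (a : Fin n → ℝ) (ha : ∀ j, 0 ≤ a j) :
    P {ω | ∑ j, a j * h j ω ≤ g ω} = ENNReal.ofReal (∏ j, 1 / (1 + a j)) := by
  classical
  have hexp : IsProbabilityMeasure (expMeasure 1) := isProbabilityMeasure_expMeasure one_pos
  have hgae : AEMeasurable g P := by
    by_contra hc
    rw [Measure.map_of_not_aemeasurable hc] at hglaw
    have h1 := hexp.measure_univ
    rw [← hglaw] at h1
    simp at h1
  have hhae : ∀ j, AEMeasurable (h j) P := by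
    intro j
    by_contra hc
    have h0 := hhlaw j
    rw [Measure.map_of_not_aemeasurable hc] at h0
    have h1 := hexp.measure_univ
    rw [← h0] at h1
    simp at h1
  set G : Ω → ℝ := hgae.mk g with hGdef
  set H : Fin n → Ω → ℝ := fun j => (hhae j).mk (h j) with hHdef
  have hGmeas : Measurable G := hgae.measurable_mk
  have hHmeas : ∀ j, Measurable (H j) := fun j => (hhae j).measurable_mk
  have hGlaw : Measure.map G P = expMeasure 1 := by
    rw [← Measure.map_congr hgae.ae_eq_mk, hglaw]
  have hHlaw : ∀ j, Measure.map (H j) P = expMeasure 1 := fun j => by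
    rw [← Measure.map_congr (hhae j).ae_eq_mk, hhlaw j]
  set X : Fin (n + 1) → Ω → ℝ := Fin.cons G H with hXdef
  have hXmeas : ∀ k, Measurable (X k) := by
    intro k
    refine Fin.cases ?_ ?_ k
    · simpa [hXdef] using hGmeas
    · intro j; simpa [hXdef] using hHmeas j
  have hindep' : iIndepFun X P := by
    refine iIndepFun_congr_ae (f := Fin.cons g h) ?_ hindep
    intro k
    refine Fin.cases ?_ ?_ k
    · simpa [hXdef] using hgae.ae_eq_mk
    · intro j; simpa [hXdef] using (hhae j).ae_eq_mk
  set T : Ω → ℝ := fun ω => ∑ j, a j * H j ω with hTdef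
  have hTmeas : Measurable T :=
    Finset.measurable_sum Finset.univ fun j _ => measurable_const.mul (hHmeas j)
  -- reduce to measurable versions
  have hev : P {ω | ∑ j, a j * h j ω ≤ g ω} = P {ω | T ω ≤ G ω} := by
    apply measure_congr
    filter_upwards [hgae.ae_eq_mk, ae_all_iff.2 fun j => (hhae j).ae_eq_mk] with ω hg' hh'
    simp only [eq_iff_iff]
    show (∑ j, a j * h j ω ≤ g ω) ↔ (T ω ≤ G ω)
    rw [hTdef]
    simp only [hg']
    constructor
    · intro hle
      refine le_trans (le_of_eq ?_) hle
      exact Finset.sum_congr rfl fun j _ => by rw [hh' j]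
    · intro hle
      refine le_trans (le_of_eq ?_) hle
      exact Finset.sum_congr rfl fun j _ => by rw [hh' j]
  -- independence of T and G
  set S : Finset (Fin (n + 1)) := Finset.univ.image Fin.succ with hSdef
  have hmemS : ∀ j : Fin n, j.succ ∈ S := fun j => Finset.mem_image_of_mem _ (Finset.mem_univ j)
  have h0S : (0 : Fin (n + 1)) ∉ S := by
    simp only [hSdef, Finset.mem_image]
    rintro ⟨j, -, hj⟩
    exact Fin.succ_ne_zero j hj
  have hdisj : Disjoint S ({0} : Finset (Fin (n + 1))) := by
    rw [Finset.disjoint_singleton_right]; exact h0S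
  have hTG : IndepFun T G P := by
    have base := hindep'.indepFun_finset S {0} hdisj hXmeas
    have h0m : (0 : Fin (n + 1)) ∈ ({0} : Finset (Fin (n + 1))) := Finset.mem_singleton_self 0
    set φ : ((i : S) → ℝ) → ℝ := fun x => ∑ j : Fin n, a j * x ⟨j.succ, hmemS j⟩ with hφdef
    set ψ : ((i : ({0} : Finset (Fin (n + 1)))) → ℝ) → ℝ := fun x => x ⟨0, h0m⟩ with hψdef
    have hφ : Measurable φ :=
      Finset.measurable_sum Finset.univ fun j _ => measurable_const.mul (measurable_pi_apply _)
    have hψ : Measurable ψ := measurable_pi_apply _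
    have := base.comp hφ hψ
    have h1 : (φ ∘ fun ω (i : S) => X i ω) = T := by
      funext ω
      simp only [Function.comp_apply, hφdef, hTdef, hXdef, Fin.cons_succ]
    have h2 : (ψ ∘ fun ω (i : ({0} : Finset (Fin (n + 1)))) => X i ω) = G := by
      funext ω
      simp only [Function.comp_apply, hψdef, hXdef, Fin.cons_zero]
    rwa [h1, h2] at this
  -- main computation
  haveI : IsProbabilityMeasure (Measure.map T P) := Measure.isProbabilityMeasure_map hTmeas.aemeasurable
  have hset : MeasurableSet {p : ℝ × ℝ | p.1 ≤ p.2} := measurableSet_le measurable_fst measurable_snd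
  have e1 : P {ω | T ω ≤ G ω} = (P.map fun ω => (T ω, G ω)) {p : ℝ × ℝ | p.1 ≤ p.2} := by
    rw [Measure.map_apply (hTmeas.prodMk hGmeas) hset]
    rfl
  have e2 : P.map (fun ω => (T ω, G ω)) = (P.map T).prod (expMeasure 1) := by
    rw [← hGlaw]
    exact (indepFun_iff_map_prod_eq_prod_map_map hTmeas.aemeasurable hGmeas.aemeasurable).1 hTG
  have e3 : (P.map T).prod (expMeasure 1) {p : ℝ × ℝ | p.1 ≤ p.2}
      = ∫⁻ t, expMeasure 1 (Set.Ici t) ∂(P.map T) := by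
    rw [Measure.prod_apply hset]
    rfl
  have hIcimeas : Measurable fun t : ℝ => expMeasure 1 (Set.Ici t) := by
    apply Antitone.measurable
    intro t t' htt'
    exact measure_mono (Set.Ici_subset_Ici.2 htt')
  have e4 : ∫⁻ t, expMeasure 1 (Set.Ici t) ∂(P.map T) = ∫⁻ ω, expMeasure 1 (Set.Ici (T ω)) ∂P :=
    lintegral_map hIcimeas hTmeas
  have hH0 : ∀ j, ∀ᵐ ω ∂P, 0 ≤ H j ω := by
    intro j
    have hnull : P (H j ⁻¹' Set.Iio 0) = 0 := by
      rw [← Measure.map_apply (hHmeas j) measurableSet_Iio, hHlaw j, expMeasure_Iio_zero]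
    rw [ae_iff]
    convert hnull using 1
    congr 1
    ext ω
    simp [not_le]
  have hT0 : ∀ᵐ ω ∂P, 0 ≤ T ω := by
    filter_upwards [ae_all_iff.2 hH0] with ω hω
    exact Finset.sum_nonneg fun j _ => mul_nonneg (ha j) (hω j)
  have e5 : ∫⁻ ω, expMeasure 1 (Set.Ici (T ω)) ∂P
      = ∫⁻ ω, ∏ j, ENNReal.ofReal (exp (-(a j * H j ω))) ∂P := by
    apply lintegral_congr_ae
    filter_upwards [hT0] with ω hω
    rw [expMeasure_Ici hω,
      ← ENNReal.ofReal_prod_of_nonneg fun j _ => (exp_pos _).le, ← Real.exp_sum]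
    congr 1
    rw [hTdef, ← Finset.sum_neg_distrib]
  -- product of integrals via independence
  set b : Fin (n + 1) → ℝ := Fin.cons 0 a with hbdef
  set F : Fin (n + 1) → Ω → ℝ≥0∞ := fun k ω => ENNReal.ofReal (exp (-(b k * X k ω))) with hFdef
  have hFmeas : ∀ k, Measurable (F k) := fun k =>
    ENNReal.measurable_ofReal.comp ((Real.continuous_exp.measurable).comp
      ((measurable_const.mul (hXmeas k)).neg))
  have hFind : iIndepFun F P := by
    have := hindep'.comp (fun k x => ENNReal.ofReal (exp (-(b k * x))))
      (fun k => ENNReal.measurable_ofReal.comp ((Real.continuous_exp.measurable).comp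
        ((measurable_const.mul measurable_id).neg)))
    exact this
  have hsucc : ∀ (j : Fin n) (ω : Ω), F j.succ ω = ENNReal.ofReal (exp (-(a j * H j ω))) := by
    intro j ω
    simp only [hFdef, hbdef, hXdef, Fin.cons_succ]
  have hprodimg : ∀ (u : Fin (n + 1) → ℝ≥0∞),
      ∏ k ∈ S, u k = ∏ j : Fin n, u j.succ := by
    intro u
    rw [hSdef, Finset.prod_image]
    intro x _ y _ hxy
    exact Fin.succ_injective n hxy
  have e6 : ∫⁻ ω, ∏ j, ENNReal.ofReal (exp (-(a j * H j ω))) ∂P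
      = ∏ j, ∫⁻ ω, ENNReal.ofReal (exp (-(a j * H j ω))) ∂P := by
    have key := lintegral_prod_of_iIndepFun hFmeas hFind S
    calc ∫⁻ ω, ∏ j, ENNReal.ofReal (exp (-(a j * H j ω))) ∂P
        = ∫⁻ ω, ∏ k ∈ S, F k ω ∂P := by
          apply lintegral_congr
          intro ω
          rw [hprodimg fun k => F k ω]
          exact Finset.prod_congr rfl fun j _ => (hsucc j ω).symm
      _ = ∏ k ∈ S, ∫⁻ ω, F k ω ∂P := key
      _ = ∏ j : Fin n, ∫⁻ ω, F j.succ ω ∂P := hprodimg _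
      _ = ∏ j, ∫⁻ ω, ENNReal.ofReal (exp (-(a j * H j ω))) ∂P := by
          exact Finset.prod_congr rfl fun j _ => by
            apply lintegral_congr
            intro ω
            rw [hsucc j ω]
  have e7 : ∀ j, ∫⁻ ω, ENNReal.ofReal (exp (-(a j * H j ω))) ∂P
      = ENNReal.ofReal (1 / (1 + a j)) := by
    intro j
    have hm : Measurable fun x : ℝ => ENNReal.ofReal (exp (-(a j * x))) :=
      ENNReal.measurable_ofReal.comp ((Real.continuous_exp.measurable).comp
        ((measurable_const.mul measurable_id).neg))
    rw [← lintegral_map hm (hHmeas j), hHlaw j]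
    exact laplace_exp (ha j)
  rw [hev, e1, e2, e3, e4, e5, e6]
  rw [ENNReal.ofReal_prod_of_nonneg fun j _ => by
    have := ha j
    positivity]
  exact Finset.prod_congr rfl fun j _ => e7 j
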